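/- Let p be an odd prime with Pisano period l_p = 2p+2 and β(p) = 4, and let C = ⟨f(x)⟩ be the cyclic code of parameters [2p+2, 2, 2p−2] over F_p generated by the Fibonacci polynomial f(x) (coordinates indexed 0, 1, …, 2p+1). Then C has exactly (p−1)/2 minimal codewords; each of the coordinates (p+1)/2, p+1, and 3(p+1)/2 belongs to the support of every minimal codeword of C; and each other coordinate i with 1 ≤ i ≤ 2p+1 and i ∉ {(p+1)/2, p+1, 3(p+1)/2} belongs to the support of exactly (p−3)/2 of the minimal codewords of C. -/

import Mathlib

open Polynomial

/-- The Fibonacci sequence over `ZMod p`: `F 0 = 0`, `F 1 = 1`, `F (n+2) = F (n+1) + F n`. -/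
def fibMod (p : ℕ) : ℕ → ZMod p
  | 0 => 0
  | 1 => 1
  | n + 2 => fibMod p (n + 1) + fibMod p n

/-- The Pisano period of `p`: the least `t > 0` with `F t = F 0 = 0` and `F (t+1) = F 1 = 1`. -/
noncomputable def pisano (p : ℕ) : ℕ :=
  sInf {t : ℕ | 0 < t ∧ fibMod p t = 0 ∧ fibMod p (t + 1) = 1}

/-- `β(p)`: the number of indices `0 ≤ i < l_p` with `F i = 0` in `ZMod p`. -/
noncomputable def betaP (p : ℕ) : ℕ :=
  ((Finset.range (pisano p)).filter fun i => fibMod p i = 0).card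

/-- The Fibonacci polynomial `f(x) = ∑_{i=0}^{l_p - 1} F_i x^i` over `ZMod p`. -/
noncomputable def fibPoly (p : ℕ) : (ZMod p)[X] :=
  ∑ i ∈ Finset.range (pisano p), C (fibMod p i) * X ^ i

/-- Cyclic shift of a vector of length `l`: the shift `v ↦ (v_{l-1}, v_0, …, v_{l-2})`,
which corresponds to multiplication by `x` modulo `x^l - 1` on coefficient vectors. -/
def cyclicShift (p l : ℕ) (v : Fin l → ZMod p) : Fin l → ZMod p :=
  fun i => v ⟨((i : ℕ) + (l - 1)) % l, Nat.mod_lt _ i.pos⟩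

/-- The coefficient vector of length `l` of a polynomial. -/
def polyVec (p l : ℕ) (g : (ZMod p)[X]) : Fin l → ZMod p := fun i => g.coeff i

/-- The cyclic code of length `l` generated by `g`: the ideal generated by the image of `g`
in `F_p[x]/(x^l - 1)`, identified with the subspace of `F_p^l` of coefficient vectors via
`a_0 + a_1 x + ⋯ + a_{l-1} x^{l-1} ↦ (a_0, …, a_{l-1})`; equivalently (since multiplication
by `x` is the cyclic shift), the `F_p`-span of all cyclic shifts of the coefficient vector
of `g`. -/
noncomputable def cyclicCode (p l : ℕ) (g : (ZMod p)[X]) :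
    Submodule (ZMod p) (Fin l → ZMod p) :=
  Submodule.span (ZMod p) {w | ∃ k : ℕ, w = (cyclicShift p l)^[k] (polyVec p l g)}

/-- The cyclic code of length `l` generated by the Fibonacci polynomial `f(x)`. -/
noncomputable def fibCode (p l : ℕ) : Submodule (ZMod p) (Fin l → ZMod p) :=
  cyclicCode p l (fibPoly p)

/-- A minimal codeword of a code `Cc ⊆ F_p^l`: a nonzero codeword `c` with first coordinate
`c 0 = 1` such that every codeword of `Cc` whose support is contained in `supp(c)` is a
scalar multiple of `c`. -/
def IsMinimalCodeword (p l : ℕ) (Cc : Submodule (ZMod p) (Fin l → ZMod p))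
    (c : Fin l → ZMod p) : Prop :=
  c ∈ Cc ∧ c ≠ 0 ∧ (∀ h : 0 < l, c ⟨0, h⟩ = 1) ∧
    ∀ v ∈ Cc, (∀ i, v i ≠ 0 → c i ≠ 0) → ∃ k : ZMod p, v = k • c

lemma fibMod_zero (p : ℕ) : fibMod p 0 = 0 := rfl
lemma fibMod_one (p : ℕ) : fibMod p 1 = 1 := rfl
lemma fibMod_add_two (p n : ℕ) : fibMod p (n + 2) = fibMod p (n + 1) + fibMod p n := rfl

/-- Addition formula. -/
lemma fibMod_add_formula (p : ℕ) : ∀ m n, fibMod p (m + n + 1)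
    = fibMod p (m + 1) * fibMod p (n + 1) + fibMod p m * fibMod p n := by
  intro m
  induction m using Nat.twoStepInduction with
  | zero => intro n; simp [fibMod_zero, fibMod_one]
  | one =>
    intro n
    have h2 : fibMod p 2 = 1 := by simp [fibMod_add_two, fibMod_zero, fibMod_one]
    have : 1 + n + 1 = n + 2 := by ring
    rw [this, fibMod_add_two, h2, fibMod_one]; ring
  | more m ih1 ih2 =>
    intro n
    have e : m + 2 + n + 1 = (m + n + 1) + 2 := by ring
    rw [e, fibMod_add_two]
    have e2 : m + n + 1 + 1 = m + 1 + n + 1 := by ring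
    rw [e2]
    have e3 : m + 2 + 1 = (m + 1) + 2 := by ring
    rw [e3, fibMod_add_two, fibMod_add_two]
    have hrec : fibMod p (m + 1 + 1) = fibMod p (m + 1) + fibMod p m := fibMod_add_two p m
    linear_combination (ih2 n) + (ih1 n) + fibMod p (n + 1) * hrec

/-- d'Ocagne-type cross identity. -/
lemma fibMod_cross (p : ℕ) : ∀ n k, fibMod p (n + k) * fibMod p (n + 1)
    = fibMod p (n + k + 1) * fibMod p n + (-1 : ZMod p) ^ n * fibMod p k := by
  intro n
  induction n with
  | zero => intro k; simp [fibMod_zero, fibMod_one]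
  | succ n ih =>
    intro k
    have e1 : n + 1 + k = (n + k) + 1 := by ring
    have e2 : n + 1 + k + 1 = (n + k) + 2 := by ring
    have e3 : n + 1 + 1 = n + 2 := by ring
    rw [e1, e3, fibMod_add_two]
    have e2' : n + k + 1 + 1 = n + k + 2 := by ring
    rw [e2', fibMod_add_two]
    linear_combination -(ih k)

section Periodic

variable {p l : ℕ} (hF0 : fibMod p l = 0) (hF1 : fibMod p (l + 1) = 1)

include hF0 hF1 in
lemma fibMod_periodic : ∀ n, fibMod p (n + l) = fibMod p n := by
  intro n
  induction n using Nat.twoStepInduction with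
  | zero => simpa [fibMod_zero] using hF0
  | one =>
    have : 1 + l = l + 1 := by ring
    rw [this, hF1, fibMod_one]
  | more n ih1 ih2 =>
    have e : n + 2 + l = (n + l) + 2 := by ring
    have e2 : n + l + 1 = n + 1 + l := by ring
    rw [e, fibMod_add_two, e2, ih2, ih1, fibMod_add_two]

include hF0 hF1 in
lemma fibMod_mul_add (k r : ℕ) : fibMod p (r + k * l) = fibMod p r := by
  induction k with
  | zero => simp
  | succ k ih =>
    have e : r + (k + 1) * l = (r + k * l) + l := by ring
    rw [e, fibMod_periodic hF0 hF1, ih]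

include hF0 hF1 in
lemma fibMod_mod (n : ℕ) : fibMod p n = fibMod p (n % l) := by
  conv_lhs => rw [← Nat.mod_add_div n l, ← Nat.mul_comm (n / l) l]
  rw [fibMod_mul_add hF0 hF1]

include hF0 hF1 in
lemma fibMod_consec_ne (hl0 : 0 < l) (hp1 : (1 : ZMod p) ≠ 0) (n : ℕ) :
    ¬(fibMod p n = 0 ∧ fibMod p (n + 1) = 0) := by
  rintro ⟨h0, h1⟩
  have hall : ∀ k, fibMod p (n + k + 1) = 0 := by
    intro k
    rw [fibMod_add_formula, h0, h1]
    ring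
  have hge : n + 1 ≤ (n + 1) * l := Nat.le_mul_of_pos_right _ hl0
  obtain ⟨k, hk⟩ : ∃ k, (n + 1) * l + 1 = n + k + 1 := ⟨(n + 1) * l - (n + 1) + 1, by omega⟩
  have h2 : fibMod p ((n + 1) * l + 1) = 1 := by
    rw [show (n + 1) * l + 1 = 1 + (n + 1) * l from by ring, fibMod_mul_add hF0 hF1, fibMod_one]
  rw [hk, hall k] at h2
  exact hp1 h2.symm

end Periodic

lemma fibPoly_coeff (p i : ℕ) (hi : i < pisano p) : (fibPoly p).coeff i = fibMod p i := by
  unfold fibPoly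
  rw [Polynomial.finset_sum_coeff]
  simp only [Polynomial.coeff_C_mul, Polynomial.coeff_X_pow, mul_ite, mul_one, mul_zero]
  rw [Finset.sum_eq_single i]
  · simp
  · intro j _ hij; simp [Ne.symm hij]
  · intro h; exact absurd (Finset.mem_range.mpr hi) h

/-- The basic shifted-Fibonacci vectors. -/
def fibVec (p l m : ℕ) : Fin l → ZMod p := fun i => fibMod p (m + (i : ℕ))

section Span

variable {p l : ℕ} (hF0 : fibMod p l = 0) (hF1 : fibMod p (l + 1) = 1)
  (hl : pisano p = l) (hl0 : 0 < l)

include hF0 hF1 hl0 in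
lemma cyclicShift_fibVec (m : ℕ) :
    cyclicShift p l (fibVec p l m) = fibVec p l (m + (l - 1)) := by
  funext i
  show fibMod p (m + ((i : ℕ) + (l - 1)) % l) = fibMod p (m + (l - 1) + (i : ℕ))
  rw [fibMod_mod hF0 hF1 (m + ((i : ℕ) + (l - 1)) % l),
      fibMod_mod hF0 hF1 (m + (l - 1) + (i : ℕ))]
  congr 1
  have h1 : (m + ((i : ℕ) + (l - 1)) % l) % l = (m + ((i : ℕ) + (l - 1))) % l :=
    ((Nat.mod_modEq ((i : ℕ) + (l - 1)) l).add_left m)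
  rw [h1]
  congr 1
  ring

include hF0 hF1 hl hl0 in
lemma polyVec_eq_fibVec : polyVec p l (fibPoly p) = fibVec p l 0 := by
  funext i
  show (fibPoly p).coeff i = fibMod p (0 + (i : ℕ))
  rw [fibPoly_coeff p i (by rw [hl]; exact i.2), Nat.zero_add]

include hF0 hF1 hl hl0 in
lemma iterate_cyclicShift (k : ℕ) :
    (cyclicShift p l)^[k] (polyVec p l (fibPoly p)) = fibVec p l (k * (l - 1)) := by
  induction k with
  | zero => simpa using polyVec_eq_fibVec hF0 hF1 hl hl0
  | succ k ih =>
    rw [Function.iterate_succ_apply', ih, cyclicShift_fibVec hF0 hF1 hl0]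
    congr 1
    ring

include hF0 hF1 hl0 in
lemma fibMod_pred (j : ℕ) :
    fibMod p (l - 1 + (j + 1)) = fibMod p j := by
  have e : l - 1 + (j + 1) = j + l := by omega
  rw [e, fibMod_periodic hF0 hF1]

include hF0 hF1 hl0 in
lemma fibMod_last : fibMod p (l - 1) = 1 := by
  have e : l + 1 = (l - 1) + 2 := by omega
  have := hF1
  rw [e, fibMod_add_two] at this
  have e2 : l - 1 + 1 = l := by omega
  rw [e2, hF0, zero_add] at this
  exact this

include hF0 hF1 hl0 in
lemma fibVec_decomp (m : ℕ) :
    fibVec p l m = fibMod p (m + 1) • fibVec p l 0 + fibMod p m • fibVec p l (l - 1) := by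
  funext i
  show fibMod p (m + (i : ℕ))
      = fibMod p (m + 1) * fibMod p (0 + (i : ℕ)) + fibMod p m * fibMod p (l - 1 + (i : ℕ))
  rcases Nat.eq_zero_or_pos (i : ℕ) with h0 | hpos
  · rw [h0]
    simp only [Nat.add_zero, Nat.zero_add, fibMod_zero, mul_zero, zero_add]
    rw [fibMod_last hF0 hF1 hl0, mul_one]
  · obtain ⟨j, hj⟩ : ∃ j, (i : ℕ) = j + 1 := ⟨(i : ℕ) - 1, by omega⟩
    rw [hj, fibMod_pred hF0 hF1 hl0 j, Nat.zero_add,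
      show m + (j + 1) = m + j + 1 from by ring, fibMod_add_formula]

include hF0 hF1 hl hl0 in
lemma fibCode_eq_span :
    fibCode p l = Submodule.span (ZMod p) {fibVec p l 0, fibVec p l (l - 1)} := by
  apply le_antisymm
  · rw [fibCode, cyclicCode, Submodule.span_le]
    rintro w ⟨k, rfl⟩
    rw [SetLike.mem_coe, Submodule.mem_span_pair]
    exact ⟨fibMod p (k * (l - 1) + 1), fibMod p (k * (l - 1)),
      ((iterate_cyclicShift hF0 hF1 hl hl0 k).trans (fibVec_decomp hF0 hF1 hl0 _)).symm⟩
  · rw [Submodule.span_le]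
    rintro w (rfl | rfl)
    · exact Submodule.subset_span
        ⟨0, ((Function.iterate_zero_apply _ _).trans (polyVec_eq_fibVec hF0 hF1 hl hl0)).symm⟩
    · refine Submodule.subset_span ⟨1, ?_⟩
      have h1 : (cyclicShift p l)^[1] (polyVec p l (fibPoly p))
          = cyclicShift p l (polyVec p l (fibPoly p)) := by rw [Function.iterate_one]
      rw [h1, polyVec_eq_fibVec hF0 hF1 hl hl0, cyclicShift_fibVec hF0 hF1 hl0,
        Nat.zero_add]

include hF0 hF1 hl hl0 in
lemma mem_fibCode_iff (c : Fin l → ZMod p) :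
    c ∈ fibCode p l ↔ ∃ a b : ZMod p,
      c = fun i : Fin l => a * fibMod p (i : ℕ) + b * fibMod p (l - 1 + (i : ℕ)) := by
  rw [fibCode_eq_span hF0 hF1 hl hl0]
  rw [Submodule.mem_span_pair]
  constructor
  · rintro ⟨a, b, rfl⟩
    exact ⟨a, b, by funext i; simp [fibVec]⟩
  · rintro ⟨a, b, rfl⟩
    exact ⟨a, b, by funext i; simp [fibVec]⟩

end Span

section Alpha

variable {p l a : ℕ} [Fact p.Prime] (hF0 : fibMod p l = 0) (hF1 : fibMod p (l + 1) = 1)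
  (hl0 : 0 < l) (ha0 : 0 < a) (haz : fibMod p a = 0)
  (hamin : ∀ t, 0 < t → t < a → fibMod p t ≠ 0)

include hF0 hF1 hl0 haz in
lemma fibMod_succ_alpha_ne : fibMod p (a + 1) ≠ 0 := by
  intro h
  exact fibMod_consec_ne hF0 hF1 hl0 (one_ne_zero) a ⟨haz, h⟩

include haz in
lemma fibMod_alpha_add (n : ℕ) : fibMod p (a + n) = fibMod p (a + 1) * fibMod p n := by
  rcases n with _ | m
  · rw [Nat.add_zero, haz, fibMod_zero, mul_zero]
  · rw [show a + (m + 1) = a + m + 1 from by ring, fibMod_add_formula, haz]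
    ring

include haz in
lemma fibMod_alpha_mul_add (j n : ℕ) :
    fibMod p (j * a + n) = fibMod p (a + 1) ^ j * fibMod p n := by
  induction j with
  | zero => simp
  | succ j ih =>
    have e : (j + 1) * a + n = a + (j * a + n) := by ring
    rw [e, fibMod_alpha_add haz, ih]
    ring

include hF0 hF1 hl0 ha0 haz hamin in
lemma fibMod_eq_zero_iff (n : ℕ) : fibMod p n = 0 ↔ a ∣ n := by
  constructor
  · intro hn
    have hd : n = (n / a) * a + n % a := by
      rw [Nat.mul_comm]; exact (Nat.div_add_mod n a).symm
    rw [hd, fibMod_alpha_mul_add haz] at hn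
    have hs : fibMod p (a + 1) ^ (n / a) ≠ 0 :=
      pow_ne_zero _ (fibMod_succ_alpha_ne hF0 hF1 hl0 haz)
    have h2 : fibMod p (n % a) = 0 := by
      rcases mul_eq_zero.mp hn with h | h
      · exact absurd h hs
      · exact h
    have : n % a = 0 := by
      by_contra hne
      exact hamin _ (Nat.pos_of_ne_zero hne) (Nat.mod_lt _ ha0) h2
    exact Nat.dvd_of_mod_eq_zero this
  · rintro ⟨j, rfl⟩
    rw [Nat.mul_comm, show j * a = j * a + 0 from by ring, fibMod_alpha_mul_add haz,
      fibMod_zero, mul_zero]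

end Alpha

lemma card_filter_dvd (a m : ℕ) (ha : 0 < a) :
    ((Finset.range (a * m)).filter (fun i => a ∣ i)).card = m := by
  have himg : (Finset.range (a * m)).filter (fun i => a ∣ i)
      = (Finset.range m).image (fun j => a * j) := by
    ext x
    simp only [Finset.mem_filter, Finset.mem_range, Finset.mem_image]
    constructor
    · rintro ⟨hx, j, rfl⟩
      exact ⟨j, by exact lt_of_mul_lt_mul_left hx (Nat.zero_le a), rfl⟩
    · rintro ⟨j, hj, rfl⟩
      exact ⟨(Nat.mul_lt_mul_left ha).mpr hj, ⟨j, rfl⟩⟩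
  rw [himg, Finset.card_image_of_injective _ (fun x y h => by
    exact Nat.eq_of_mul_eq_mul_left ha h), Finset.card_range]

/-- For an odd prime `p` with `l_p = 2p + 2` and `β(p) = 4`, the
`[2p+2, 2, 2p-2]` cyclic code `C = ⟨f(x)⟩` has exactly `(p-1)/2` minimal codewords; each
of the coordinates `(p+1)/2`, `p+1` and `3(p+1)/2` lies in the support of every minimal
codeword (dictatorial participants); and every other coordinate `i` with `1 ≤ i ≤ 2p + 1`
lies in the support of exactly `(p-3)/2` of them. -/
theorem fibCode_minimal_codewords_long_beta_four (p : ℕ) [Fact p.Prime] (hodd : Odd p)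
    (hl : pisano p = 2 * p + 2) (hb : betaP p = 4) :
    Set.ncard {c | IsMinimalCodeword p (2 * p + 2) (fibCode p (2 * p + 2)) c}
        = (p - 1) / 2 ∧
      (∀ i : Fin (2 * p + 2),
        ((i : ℕ) = (p + 1) / 2 ∨ (i : ℕ) = p + 1 ∨ (i : ℕ) = 3 * (p + 1) / 2) →
        ∀ c, IsMinimalCodeword p (2 * p + 2) (fibCode p (2 * p + 2)) c → c i ≠ 0) ∧
      ∀ i : Fin (2 * p + 2), 1 ≤ (i : ℕ) →
        (i : ℕ) ≠ (p + 1) / 2 → (i : ℕ) ≠ p + 1 → (i : ℕ) ≠ 3 * (p + 1) / 2 →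
        Set.ncard {c | IsMinimalCodeword p (2 * p + 2) (fibCode p (2 * p + 2)) c ∧
          c i ≠ 0} = (p - 3) / 2 := by
  have hp : p.Prime := Fact.out
  have hp3 : 3 ≤ p := by
    have h2 := hp.two_le
    rcases Nat.lt_or_ge p 3 with h | h
    · exfalso
      have : p = 2 := by omega
      rw [Nat.odd_iff, this] at hodd
      omega
    · exact h
  set l := 2 * p + 2 with hldef
  have hl0 : 0 < l := by omega
  -- Pisano facts
  have hSne : {t : ℕ | 0 < t ∧ fibMod p t = 0 ∧ fibMod p (t + 1) = 1}.Nonempty := by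
    by_contra hemp
    rw [Set.not_nonempty_iff_eq_empty] at hemp
    have : pisano p = 0 := by rw [pisano, hemp, Nat.sInf_empty]
    omega
  have hmem := Nat.sInf_mem hSne
  rw [← pisano] at hmem
  rw [hl] at hmem
  obtain ⟨-, hF0, hF1⟩ := hmem
  -- alpha
  set a := sInf {t : ℕ | 0 < t ∧ fibMod p t = 0} with hadef
  have haSne : {t : ℕ | 0 < t ∧ fibMod p t = 0}.Nonempty := ⟨l, hl0, hF0⟩
  obtain ⟨ha0, haz⟩ := Nat.sInf_mem haSne
  have hamin : ∀ t, 0 < t → t < a → fibMod p t ≠ 0 := by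
    intro t ht hta htz
    exact Nat.notMem_of_lt_sInf hta ⟨ht, htz⟩
  have hal : a ≤ l := Nat.sInf_le ⟨hl0, hF0⟩
  have hzero : ∀ n, fibMod p n = 0 ↔ a ∣ n :=
    fibMod_eq_zero_iff hF0 hF1 hl0 ha0 haz hamin
  have hadvdl : a ∣ l := (hzero l).mp hF0
  -- beta = 4 forces l = 4a
  have hbl : ((Finset.range l).filter (fun i => fibMod p i = 0)).card = 4 := by
    rw [← hb, betaP, hl]
  have hfil : (Finset.range l).filter (fun i => fibMod p i = 0)
      = (Finset.range l).filter (fun i => a ∣ i) :=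
    Finset.filter_congr (fun i _ => by simp [hzero i])
  obtain ⟨m, hm⟩ := hadvdl
  rw [hfil, hm, card_filter_dvd a m ha0] at hbl
  rw [hbl] at hm
  have hl4 : l = 4 * a := by omega
  have h2a : 2 * a = p + 1 := by omega
  have ha2 : 2 ≤ a := by omega
  -- basic values
  have hlast : fibMod p (l - 1) = 1 := fibMod_last hF0 hF1 hl0
  have hmemiff := mem_fibCode_iff hF0 hF1 hl hl0
  -- the normalized words
  set cw : ZMod p → (Fin l → ZMod p) :=
    fun x => fun i : Fin l => x * fibMod p (i : ℕ) + fibMod p (l - 1 + (i : ℕ)) with hcwdef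
  have hcw_mem : ∀ x, cw x ∈ fibCode p l := by
    intro x
    rw [hmemiff]
    exact ⟨x, 1, by funext i; simp [hcwdef]⟩
  have hcw_at0 : ∀ x, cw x ⟨0, hl0⟩ = 1 := by
    intro x
    show x * fibMod p ((0 : ℕ)) + fibMod p (l - 1 + (0 : ℕ)) = 1
    rw [fibMod_zero, Nat.add_zero, hlast, mul_zero, zero_add]
  have h1l : 1 < l := by omega
  have hcw_at1 : ∀ x, cw x ⟨1, h1l⟩ = x := by
    intro x
    show x * fibMod p ((1 : ℕ)) + fibMod p (l - 1 + (1 : ℕ)) = x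
    rw [fibMod_one, show l - 1 + 1 = l from by omega, hF0, mul_one, add_zero]
  -- dvd characterization
  have hchar : ∀ r : ℕ, 1 ≤ r → r < a → ∀ x : ℕ, x < l →
      (a ∣ (l - r + x) ↔ (x = r ∨ x = a + r ∨ x = 2 * a + r ∨ x = 3 * a + r)) := by
    intro r hr1 hra x hx
    constructor
    · rintro ⟨k, hk⟩
      have hk8 : k < 8 := by
        by_contra hge
        have : a * 8 ≤ a * k := Nat.mul_le_mul_left a (by omega)
        omega
      interval_cases k <;> omega
    · rintro (rfl | rfl | rfl | rfl)
      · exact ⟨4, by omega⟩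
      · exact ⟨5, by omega⟩
      · exact ⟨6, by omega⟩
      · exact ⟨7, by omega⟩
  -- the candidate minimal codewords
  set crw : ℕ → (Fin l → ZMod p) :=
    fun r => cw (fibMod p (l - r + 1) * (fibMod p (l - r))⁻¹) with hcrwdef
  have hlr_ne : ∀ r : ℕ, 1 ≤ r → r < a → fibMod p (l - r) ≠ 0 := by
    intro r hr1 hra hz
    obtain ⟨k, hk⟩ := (hzero _).mp hz
    have hk8 : k < 8 := by
      by_contra hge
      have : a * 8 ≤ a * k := Nat.mul_le_mul_left a (by omega)
      omega
    interval_cases k <;> omega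
  have hmulid : ∀ r : ℕ, 1 ≤ r → r < a → ∀ i : Fin l,
      fibMod p (l - r) * crw r i = fibMod p (l - r + (i : ℕ)) := by
    intro r hr1 hra i
    have hinv : fibMod p (l - r) * (fibMod p (l - r))⁻¹ = 1 :=
      mul_inv_cancel₀ (hlr_ne r hr1 hra)
    show fibMod p (l - r) * (fibMod p (l - r + 1) * (fibMod p (l - r))⁻¹ * fibMod p (i : ℕ)
        + fibMod p (l - 1 + (i : ℕ))) = _
    rcases Nat.eq_zero_or_pos (i : ℕ) with h0 | hpos
    · simp only [h0, Nat.add_zero, fibMod_zero, mul_zero, zero_add, hlast, mul_one]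
    · obtain ⟨j, hj⟩ : ∃ j, (i : ℕ) = j + 1 := ⟨(i : ℕ) - 1, by omega⟩
      rw [hj, fibMod_pred hF0 hF1 hl0 j,
        show l - r + (j + 1) = (l - r) + j + 1 from by ring, fibMod_add_formula]
      linear_combination (fibMod p (l - r + 1) * fibMod p (j + 1)) * hinv
  -- zero positions of the candidate words
  have hzero_crw : ∀ r : ℕ, 1 ≤ r → r < a → ∀ i : Fin l,
      (crw r i = 0 ↔ ((i : ℕ) = r ∨ (i : ℕ) = a + r ∨ (i : ℕ) = 2 * a + r ∨
        (i : ℕ) = 3 * a + r)) := by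
    intro r hr1 hra i
    rw [← hchar r hr1 hra (i : ℕ) i.2, ← hzero, ← hmulid r hr1 hra i]
    constructor
    · intro h; rw [h, mul_zero]
    · intro h
      rcases mul_eq_zero.mp h with h | h
      · exact absurd h (hlr_ne r hr1 hra)
      · exact h
  -- words with no zero are characterized
  have hmul_nonzero : ∀ x : ZMod p, ∀ j : ℕ, a ∣ j → (j : ℕ) < l → ∀ hj : j < l,
      cw x ⟨j, hj⟩ ≠ 0 := by
    intro x j hdvd _ hj hz
    have hfj : fibMod p j = 0 := (hzero j).mpr hdvd
    have : cw x ⟨j, hj⟩ = fibMod p (l - 1 + j) := by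
      show x * fibMod p j + fibMod p (l - 1 + j) = _
      rw [hfj, mul_zero, zero_add]
    rw [this] at hz
    obtain ⟨u, hu⟩ := hdvd
    obtain ⟨w, hw⟩ := (hzero _).mp hz
    have hu8 : u < 8 := by
      by_contra hge
      have : a * 8 ≤ a * u := Nat.mul_le_mul_left a (by omega)
      omega
    have hw8 : w < 8 := by
      by_contra hge
      have : a * 8 ≤ a * w := Nat.mul_le_mul_left a (by omega)
      omega
    interval_cases u <;> interval_cases w <;> omega
  -- classification of minimal codewords
  have hclass : ∀ c, IsMinimalCodeword p l (fibCode p l) c ↔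
      ∃ r : ℕ, (1 ≤ r ∧ r < a) ∧ c = crw r := by
    intro c
    constructor
    · rintro ⟨hcC, hcne, hcone, hcmin⟩
      obtain ⟨x, b, hcform⟩ := (hmemiff c).mp hcC
      have hb1 : b = 1 := by
        have h0 := hcone hl0
        rw [hcform] at h0
        have h0' : x * fibMod p ((0 : ℕ)) + b * fibMod p (l - 1 + (0 : ℕ)) = 1 := h0
        rw [Nat.add_zero, fibMod_zero, hlast, mul_zero, zero_add, mul_one] at h0'
        exact h0'
      rw [hb1] at hcform
      have hcw : c = cw x := by rw [hcform]; funext i; simp [hcwdef]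
      by_cases hex : ∃ i : Fin l, c i = 0
      · obtain ⟨i0, hi0⟩ := hex
        have hnd : ¬ a ∣ (i0 : ℕ) := by
          intro hdvd
          rw [hcw] at hi0
          exact hmul_nonzero x (i0 : ℕ) hdvd i0.2 i0.2 (by
            convert hi0 using 2)
        set r := (i0 : ℕ) % a with hrdef
        have hr1 : 1 ≤ r := by
          rcases Nat.eq_zero_or_pos r with h | h
          · exact absurd (Nat.dvd_of_mod_eq_zero h) hnd
          · exact h
        have hra : r < a := Nat.mod_lt _ ha0
        have hdm := Nat.div_add_mod (i0 : ℕ) a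
        have hq4 : (i0 : ℕ) / a < 4 := by
          rw [Nat.div_lt_iff_lt_mul ha0]
          have := i0.2
          omega
        have hmem4 : (i0 : ℕ) = r ∨ (i0 : ℕ) = a + r ∨ (i0 : ℕ) = 2 * a + r ∨
            (i0 : ℕ) = 3 * a + r := by
          set q := (i0 : ℕ) / a with hqdef
          interval_cases q <;> omega
        refine ⟨r, ⟨hr1, hra⟩, ?_⟩
        have hcrz : crw r i0 = 0 := (hzero_crw r hr1 hra i0).mpr hmem4
        -- both c = cw x and crw r vanish at i0, and F i0 ≠ 0, hence x = a_r
        have hfz : fibMod p (i0 : ℕ) ≠ 0 := fun h => hnd ((hzero _).mp h)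
        have h1 : x * fibMod p (i0 : ℕ) + fibMod p (l - 1 + (i0 : ℕ)) = 0 := by
          rw [hcw] at hi0; exact hi0
        have h2 : fibMod p (l - r + 1) * (fibMod p (l - r))⁻¹ * fibMod p (i0 : ℕ)
            + fibMod p (l - 1 + (i0 : ℕ)) = 0 := hcrz
        have hxeq : x = fibMod p (l - r + 1) * (fibMod p (l - r))⁻¹ := by
          have h3 : (x - fibMod p (l - r + 1) * (fibMod p (l - r))⁻¹)
              * fibMod p (i0 : ℕ) = 0 := by linear_combination h1 - h2
          rcases mul_eq_zero.mp h3 with h | h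
          · linear_combination h
          · exact absurd h hfz
        rw [hcw, hxeq]
      · exfalso
        push_neg at hex
        have hvmem : fibVec p l 0 ∈ fibCode p l := by
          rw [hmemiff]
          exact ⟨1, 0, by funext i; simp [fibVec]⟩
        obtain ⟨k, hk⟩ := hcmin (fibVec p l 0) hvmem (fun i _ => hex i)
        have hk0 : k = 0 := by
          have := congrFun hk ⟨0, hl0⟩
          have hc0 := hcone hl0
          simp only [Pi.smul_apply, smul_eq_mul, hc0, mul_one] at this
          rw [← this]
          show fibMod p (0 + (0 : ℕ)) = 0
          rw [Nat.add_zero, fibMod_zero]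
        have := congrFun hk ⟨1, h1l⟩
        rw [hk0] at this
        simp only [Pi.smul_apply, smul_eq_mul, zero_mul] at this
        have h1 : fibMod p (0 + (1 : ℕ)) = (1 : ZMod p) := by
          rw [Nat.zero_add, fibMod_one]
        rw [show fibVec p l 0 ⟨1, h1l⟩ = fibMod p (0 + (1 : ℕ)) from rfl, h1] at this
        exact one_ne_zero this
    · rintro ⟨r, ⟨hr1, hra⟩, rfl⟩
      refine ⟨hcw_mem _, ?_, ?_, ?_⟩
      · intro h
        have h0 : crw r ⟨0, hl0⟩ = 0 := by rw [h]; rfl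
        have h1 : crw r ⟨0, hl0⟩ = 1 := hcw_at0 _
        exact zero_ne_one (h0.symm.trans h1)
      · intro _
        exact hcw_at0 _
      · intro v hv hsupp
        obtain ⟨x, b, hvform⟩ := (hmemiff v).mp hv
        refine ⟨b, ?_⟩
        have hrl : r < l := by omega
        have hcrz : crw r ⟨r, hrl⟩ = 0 :=
          (hzero_crw r hr1 hra ⟨r, hrl⟩).mpr (Or.inl rfl)
        have hvz : v ⟨r, hrl⟩ = 0 := by
          by_contra hne
          exact (hsupp _ hne) hcrz
        have hfr : fibMod p r ≠ 0 := hamin r hr1 hra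
        rw [hvform] at hvz
        have h2 : fibMod p (l - r + 1) * (fibMod p (l - r))⁻¹ * fibMod p r
            + fibMod p (l - 1 + r) = 0 := hcrz
        have hxb : x = b * (fibMod p (l - r + 1) * (fibMod p (l - r))⁻¹) := by
          have h3 : (x - b * (fibMod p (l - r + 1) * (fibMod p (l - r))⁻¹))
              * fibMod p r = 0 := by linear_combination hvz - b * h2
          rcases mul_eq_zero.mp h3 with h | h
          · linear_combination h
          · exact absurd h hfr
        rw [hvform]
        funext i
        show x * fibMod p (i : ℕ) + b * fibMod p (l - 1 + (i : ℕ)) = _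
        show _ = b * (fibMod p (l - r + 1) * (fibMod p (l - r))⁻¹ * fibMod p (i : ℕ)
          + fibMod p (l - 1 + (i : ℕ)))
        rw [hxb]
        ring
  -- injectivity of the parametrization
  have hcrw_inj : ∀ r r', 1 ≤ r → r < a → 1 ≤ r' → r' < a → crw r = crw r' → r = r' := by
    intro r r' hr1 hra hr1' hra' heq
    by_contra hne
    have hrl : r < l := by omega
    have hz : crw r ⟨r, hrl⟩ = 0 := (hzero_crw r hr1 hra _).mpr (Or.inl rfl)
    rw [heq] at hz
    have h4 := (hzero_crw r' hr1' hra' ⟨r, hrl⟩).mp hz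
    simp only [Fin.val_mk] at h4
    omega
  have hsetS : {c | IsMinimalCodeword p l (fibCode p l) c}
      = ↑((Finset.Icc 1 (a - 1)).image crw) := by
    ext c
    simp only [Set.mem_setOf_eq, Finset.coe_image, Set.mem_image, Finset.mem_coe,
      Finset.mem_Icc, hclass c]
    constructor
    · rintro ⟨r, ⟨hr1, hra⟩, rfl⟩
      exact ⟨r, ⟨hr1, by omega⟩, rfl⟩
    · rintro ⟨r, ⟨hr1, hra⟩, rfl⟩
      exact ⟨r, ⟨hr1, by omega⟩, rfl⟩
  have hinjIcc : Set.InjOn crw ↑(Finset.Icc 1 (a - 1)) := by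
    intro r hr r' hr' heq
    simp only [Finset.coe_Icc, Set.mem_Icc] at hr hr'
    exact hcrw_inj r r' hr.1 (by omega) hr'.1 (by omega) heq
  have hcard1 : ((Finset.Icc 1 (a - 1)).image crw).card = a - 1 := by
    rw [Finset.card_image_of_injOn hinjIcc, Nat.card_Icc]
    omega
  refine ⟨?_, ?_, ?_⟩
  · rw [hsetS, Set.ncard_coe_finset, hcard1]
    omega
  · intro i hi c hc
    obtain ⟨r, ⟨hr1, hra⟩, rfl⟩ := (hclass c).mp hc
    intro hz
    have h4 := (hzero_crw r hr1 hra i).mp hz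
    have hival : (i : ℕ) = a ∨ (i : ℕ) = 2 * a ∨ (i : ℕ) = 3 * a := by
      rcases hi with h | h | h
      · left; omega
      · right; left; omega
      · right; right; omega
    omega
  · intro i hi1 hia hi2a hi3a
    set r0 := (i : ℕ) % a with hr0def
    have hnd' : ¬ a ∣ (i : ℕ) := by
      rintro ⟨k, hk⟩
      have hk4 : k < 4 := by
        by_contra hge
        have : a * 4 ≤ a * k := Nat.mul_le_mul_left a (by omega)
        have := i.2
        omega
      interval_cases k <;> omega
    have hr01 : 1 ≤ r0 := by
      rcases Nat.eq_zero_or_pos r0 with h | h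
      · exact absurd (Nat.dvd_of_mod_eq_zero h) hnd'
      · exact h
    have hr0a : r0 < a := Nat.mod_lt _ ha0
    have hdm := Nat.div_add_mod (i : ℕ) a
    have hq4 : (i : ℕ) / a < 4 := by
      rw [Nat.div_lt_iff_lt_mul ha0]
      have := i.2
      omega
    have hmem4 : (i : ℕ) = r0 ∨ (i : ℕ) = a + r0 ∨ (i : ℕ) = 2 * a + r0 ∨
        (i : ℕ) = 3 * a + r0 := by
      set q := (i : ℕ) / a
      interval_cases q <;> omega
    have hsetT : {c | IsMinimalCodeword p l (fibCode p l) c ∧ c i ≠ 0}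
        = ↑(((Finset.Icc 1 (a - 1)).erase r0).image crw) := by
      ext c
      simp only [Set.mem_setOf_eq, Finset.coe_image, Set.mem_image, Finset.mem_coe,
        Finset.mem_erase, Finset.mem_Icc, hclass c]
      constructor
      · rintro ⟨⟨r, ⟨hr1, hra⟩, rfl⟩, hcne⟩
        refine ⟨r, ⟨?_, hr1, by omega⟩, rfl⟩
        intro hrr0
        exact hcne ((hzero_crw r hr1 hra i).mpr (by omega))
      · rintro ⟨r, ⟨hrr0, hr1, hra⟩, rfl⟩
        have hra' : r < a := by omega
        refine ⟨⟨r, ⟨hr1, hra'⟩, rfl⟩, ?_⟩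
        intro hz
        have h4 := (hzero_crw r hr1 hra' i).mp hz
        omega
    rw [hsetT, Set.ncard_coe_finset,
      Finset.card_image_of_injOn
        (hinjIcc.mono (Finset.coe_subset.mpr (Finset.erase_subset _ _))),
      Finset.card_erase_of_mem (Finset.mem_Icc.mpr ⟨hr01, by omega⟩), Nat.card_Icc]
    omega
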